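/- Diamond-norm identity for Pauli noise: for the Pauli noise N(ρ) = (1−p_err)ρ + Σ_i p_i P_i ρ P_i and the global white noise N_wn with the same error rate, the normalized diamond distance equals the 1-norm of the normalized error-probability deviations: ‖N − N_wn‖_⋄ / p_err = Σ_{i=1}^{4^n−1} | p_i/p_err − 1/(4^n−1) |. -/

import Mathlib

open Matrix

noncomputable section

/-- The single-qubit Pauli matrices `I, X, Y, Z`. -/
def σP : Fin 4 → Matrix (Fin 2) (Fin 2) ℂ :=
  ![1, !![0, 1; 1, 0], !![0, -Complex.I; Complex.I, 0], !![1, 0; 0, -1]]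

/-- The `n`-qubit Pauli operator labelled by `a : Fin n → Fin 4`. -/
def PauliOp {n : ℕ} (a : Fin n → Fin 4) : Matrix (Fin n → Fin 2) (Fin n → Fin 2) ℂ :=
  Matrix.of fun x y => ∏ i, σP (a i) (x i) (y i)

/-- The trace norm `‖A‖₁ = sup_{U unitary} |tr(U A)|`. -/
def traceNorm {m : Type*} [Fintype m] [DecidableEq m] (A : Matrix m m ℂ) : ℝ :=
  ⨆ U : Matrix.unitaryGroup m ℂ, ‖((U : Matrix m m ℂ) * A).trace‖

/-- The amplification `Φ ⊗ id` of a superoperator `Φ` to a second copy. -/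
def amp {m p : Type*} (Φ : Matrix m m ℂ → Matrix m m ℂ)
    (X : Matrix (m × p) (m × p) ℂ) : Matrix (m × p) (m × p) ℂ :=
  Matrix.of fun a b => Φ (Matrix.of fun i j => X (i, a.2) (j, b.2)) a.1 b.1

/-- The diamond norm `‖Φ‖_⋄ = sup_{‖X‖₁ ≤ 1} ‖(Φ ⊗ id)(X)‖₁`. -/
def diamondNorm {m : Type*} [Fintype m] [DecidableEq m]
    (Φ : Matrix m m ℂ → Matrix m m ℂ) : ℝ :=
  ⨆ X : {X : Matrix (m × m) (m × m) ℂ // traceNorm X ≤ 1}, traceNorm (amp Φ (X : Matrix (m × m) (m × m) ℂ))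

-- ## Single-qubit Pauli lemmas
lemma sigma_mul_self (k : Fin 4) : σP k * σP k = 1 := by
  fin_cases k <;> ext i j <;> fin_cases i <;> fin_cases j <;>
    simp [σP, Matrix.mul_apply, Fin.sum_univ_two, Matrix.one_apply,
      Complex.ext_iff] <;> norm_num

lemma sigma_star (k : Fin 4) (r s : Fin 2) : star (σP k r s) = σP k s r := by
  fin_cases k <;> fin_cases r <;> fin_cases s <;>
    simp [σP, Complex.ext_iff] <;> norm_num

lemma sigma_trace (k l : Fin 4) :
    ∑ t : Fin 2, (σP k * σP l) t t = if k = l then 2 else 0 := by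
  fin_cases k <;> fin_cases l <;>
    simp [σP, Matrix.mul_apply, Fin.sum_univ_two, Complex.ext_iff] <;> norm_num

lemma sigma_complete (r s r' s' : Fin 2) :
    ∑ k : Fin 4, σP k r s * star (σP k r' s') =
      if r = r' ∧ s = s' then 2 else 0 := by
  fin_cases r <;> fin_cases s <;> fin_cases r' <;> fin_cases s' <;>
    simp [σP, Fin.sum_univ_four, Complex.ext_iff] <;> norm_num


-- ## n-qubit Pauli lemmas
section PauliLemmas
lemma sum_prod_pi {ι κ : Type*} [Fintype ι] [DecidableEq ι] [Fintype κ]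
    (f : ι → κ → ℂ) : ∑ y : ι → κ, ∏ i, f i (y i) = ∏ i, ∑ t, f i t := by
  rw [Finset.prod_univ_sum (fun _ => Finset.univ) f, Fintype.piFinset_univ]

variable {n : ℕ}

lemma PauliOp_mul (a b : Fin n → Fin 4) :
    PauliOp a * PauliOp b = Matrix.of fun x z => ∏ i, (σP (a i) * σP (b i)) (x i) (z i) := by
  ext x z
  simp only [Matrix.mul_apply, PauliOp, Matrix.of_apply]
  calc ∑ y : Fin n → Fin 2, (∏ i, σP (a i) (x i) (y i)) * ∏ i, σP (b i) (y i) (z i)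
      = ∑ y : Fin n → Fin 2, ∏ i, (σP (a i) (x i) (y i) * σP (b i) (y i) (z i)) := by
        exact Finset.sum_congr rfl fun y _ => (Finset.prod_mul_distrib).symm
    _ = ∏ i, ∑ t : Fin 2, σP (a i) (x i) t * σP (b i) t (z i) :=
        sum_prod_pi fun i t => σP (a i) (x i) t * σP (b i) t (z i)
    _ = ∏ i, (σP (a i) * σP (b i)) (x i) (z i) :=
        Finset.prod_congr rfl fun i _ => (Matrix.mul_apply).symm

lemma PauliOp_mul_self (a : Fin n → Fin 4) : PauliOp a * PauliOp a = 1 := by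
  rw [PauliOp_mul]
  ext x z
  simp only [Matrix.of_apply, sigma_mul_self, Matrix.one_apply]
  rw [Finset.prod_boole]
  simp [funext_iff]

lemma PauliOp_star (a : Fin n → Fin 4) : (PauliOp a)ᴴ = PauliOp a := by
  ext x z
  simp only [Matrix.conjTranspose_apply, PauliOp, Matrix.of_apply, star_prod]
  exact Finset.prod_congr rfl fun i _ => sigma_star _ _ _

lemma PauliOp_trace (a b : Fin n → Fin 4) :
    (PauliOp a * PauliOp b).trace = if a = b then (2:ℂ)^n else 0 := by
  rw [PauliOp_mul, Matrix.trace]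
  simp only [Matrix.diag_apply, Matrix.of_apply]
  calc ∑ x : Fin n → Fin 2, ∏ i, (σP (a i) * σP (b i)) (x i) (x i)
      = ∏ i, ∑ t : Fin 2, (σP (a i) * σP (b i)) t t :=
        sum_prod_pi (fun i t => (σP (a i) * σP (b i)) t t)
    _ = ∏ i, if a i = b i then (2:ℂ) else 0 := Finset.prod_congr rfl fun i _ => sigma_trace _ _
    _ = if a = b then (2:ℂ)^n else 0 := by
        by_cases h : a = b
        · subst h; simp
        · obtain ⟨i, hi⟩ := Function.ne_iff.mp h
          rw [Finset.prod_eq_zero (Finset.mem_univ i) (if_neg hi : (if a i = b i then (2:ℂ) else 0) = 0), if_neg h]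

lemma PauliOp_complete (x y x' y' : Fin n → Fin 2) :
    ∑ a : Fin n → Fin 4, PauliOp a x y * star (PauliOp a x' y') =
      if x = x' ∧ y = y' then (2:ℂ)^n else 0 := by
  simp only [PauliOp, Matrix.of_apply, star_prod, ← Finset.prod_mul_distrib]
  calc ∑ a : Fin n → Fin 4, ∏ i, (σP (a i) (x i) (y i) * star (σP (a i) (x' i) (y' i)))
      = ∏ i, ∑ k : Fin 4, σP k (x i) (y i) * star (σP k (x' i) (y' i)) :=
        sum_prod_pi (fun i k => σP k (x i) (y i) * star (σP k (x' i) (y' i)))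
    _ = ∏ i, if x i = x' i ∧ y i = y' i then (2:ℂ) else 0 :=
        Finset.prod_congr rfl fun i _ => sigma_complete _ _ _ _
    _ = if x = x' ∧ y = y' then (2:ℂ)^n else 0 := by
        by_cases h : x = x' ∧ y = y'
        · obtain ⟨h1, h2⟩ := h; subst h1; subst h2; simp
        · rw [if_neg h]
          have : ∃ i, ¬(x i = x' i ∧ y i = y' i) := by
            by_contra hc
            push_neg at hc
            exact h ⟨funext fun i => (hc i).1, funext fun i => (hc i).2⟩
          obtain ⟨i, hi⟩ := this
          exact Finset.prod_eq_zero (Finset.mem_univ i) (if_neg hi : (if x i = x' i ∧ y i = y' i then (2:ℂ) else 0) = 0)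

end PauliLemmas


-- ## trace norm toolbox
section TraceNormLemmas
variable {m : Type*} [Fintype m] [DecidableEq m]

lemma unitary_entry_le (U : Matrix.unitaryGroup m ℂ) (i j : m) :
    ‖(U : Matrix m m ℂ) i j‖ ≤ 1 := by
  have h1 : ((U : Matrix m m ℂ) * (U : Matrix m m ℂ)ᴴ) i i = 1 := by
    rw [show (U : Matrix m m ℂ) * (U : Matrix m m ℂ)ᴴ = 1 from
      (Matrix.mem_unitaryGroup_iff).mp U.2]
    simp [Matrix.one_apply]
  have h2 : ∑ k, ‖(U : Matrix m m ℂ) i k‖^2 = 1 := by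
    have e1 : ((U : Matrix m m ℂ) * (U : Matrix m m ℂ)ᴴ) i i
        = ∑ k, (‖(U : Matrix m m ℂ) i k‖^2 : ℂ) := by
      rw [Matrix.mul_apply]
      refine Finset.sum_congr rfl fun k _ => ?_
      rw [Matrix.conjTranspose_apply]
      rw [show star ((U : Matrix m m ℂ) i k) = (starRingEnd ℂ) ((U : Matrix m m ℂ) i k) from rfl]
      rw [Complex.mul_conj, Complex.normSq_eq_norm_sq]
      push_cast
      ring
    rw [e1] at h1
    exact_mod_cast h1
  have h3 : ‖(U : Matrix m m ℂ) i j‖^2 ≤ 1 := by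
    rw [← h2]
    exact Finset.single_le_sum (f := fun k => ‖(U : Matrix m m ℂ) i k‖^2)
      (fun k _ => sq_nonneg _) (Finset.mem_univ j)
  nlinarith [norm_nonneg ((U : Matrix m m ℂ) i j)]

lemma norm_trace_unitary_mul_le (U : Matrix.unitaryGroup m ℂ) (A : Matrix m m ℂ) :
    ‖((U : Matrix m m ℂ) * A).trace‖ ≤ ∑ i, ∑ j, ‖A j i‖ := by
  rw [Matrix.trace]
  simp only [Matrix.diag_apply, Matrix.mul_apply]
  calc ‖∑ i, ∑ j, (U : Matrix m m ℂ) i j * A j i‖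
      ≤ ∑ i, ∑ j, ‖(U : Matrix m m ℂ) i j * A j i‖ :=
        (norm_sum_le _ _).trans (Finset.sum_le_sum fun i _ => norm_sum_le _ _)
    _ ≤ ∑ i, ∑ j, ‖A j i‖ := by
        refine Finset.sum_le_sum fun i _ => Finset.sum_le_sum fun j _ => ?_
        rw [norm_mul]
        calc ‖(U : Matrix m m ℂ) i j‖ * ‖A j i‖ ≤ 1 * ‖A j i‖ :=
          mul_le_mul_of_nonneg_right (unitary_entry_le U i j) (norm_nonneg _)
        _ = ‖A j i‖ := one_mul _

lemma traceNorm_bddAbove (A : Matrix m m ℂ) :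
    BddAbove (Set.range fun U : Matrix.unitaryGroup m ℂ => ‖((U : Matrix m m ℂ) * A).trace‖) :=
  ⟨∑ i, ∑ j, ‖A j i‖, by rintro x ⟨U, rfl⟩; exact norm_trace_unitary_mul_le U A⟩

lemma le_traceNorm (U : Matrix.unitaryGroup m ℂ) (A : Matrix m m ℂ) :
    ‖((U : Matrix m m ℂ) * A).trace‖ ≤ traceNorm A :=
  le_ciSup (traceNorm_bddAbove A) U

lemma traceNorm_nonneg (A : Matrix m m ℂ) : 0 ≤ traceNorm A :=
  le_trans (norm_nonneg _) (le_traceNorm 1 A)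

lemma traceNorm_add_le (A B : Matrix m m ℂ) :
    traceNorm (A + B) ≤ traceNorm A + traceNorm B :=
  ciSup_le fun U => by
    calc ‖((U : Matrix m m ℂ) * (A + B)).trace‖
        = ‖((U : Matrix m m ℂ) * A).trace + ((U : Matrix m m ℂ) * B).trace‖ := by
          rw [mul_add, Matrix.trace_add]
      _ ≤ ‖((U : Matrix m m ℂ) * A).trace‖ + ‖((U : Matrix m m ℂ) * B).trace‖ := norm_add_le _ _
      _ ≤ traceNorm A + traceNorm B := add_le_add (le_traceNorm U A) (le_traceNorm U B)

lemma traceNorm_smul (c : ℂ) (A : Matrix m m ℂ) :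
    traceNorm (c • A) = ‖c‖ * traceNorm A := by
  unfold traceNorm
  rw [Real.mul_iSup_of_nonneg (norm_nonneg c)]
  exact iSup_congr fun U => by rw [Matrix.mul_smul, Matrix.trace_smul, norm_smul]

lemma traceNorm_zero : traceNorm (0 : Matrix m m ℂ) = 0 := by
  unfold traceNorm
  simp [ciSup_const]

lemma traceNorm_sum_le {ι : Type*} (s : Finset ι) (f : ι → Matrix m m ℂ) :
    traceNorm (∑ a ∈ s, f a) ≤ ∑ a ∈ s, traceNorm (f a) := by
  classical
  induction s using Finset.induction_on with
  | empty => simp [traceNorm_zero]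
  | insert _ _ h ih =>
    rw [Finset.sum_insert h, Finset.sum_insert h]
    exact (traceNorm_add_le _ _).trans (add_le_add_right ih _)

lemma traceNorm_mul_unitary (A : Matrix m m ℂ) (W : Matrix.unitaryGroup m ℂ) :
    traceNorm (A * (W : Matrix m m ℂ)) = traceNorm A := by
  unfold traceNorm
  rw [show (fun U : Matrix.unitaryGroup m ℂ =>
        ‖((U : Matrix m m ℂ) * (A * (W : Matrix m m ℂ))).trace‖)
      = (fun V : Matrix.unitaryGroup m ℂ => ‖((V : Matrix m m ℂ) * A).trace‖)
        ∘ (Equiv.mulLeft W) from funext fun U => ?_]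
  · rw [iSup, iSup, Function.Surjective.range_comp (Equiv.mulLeft W).surjective]
  · simp only [Function.comp_apply, Equiv.coe_mulLeft, Submonoid.coe_mul]
    rw [← Matrix.mul_assoc, Matrix.trace_mul_comm, ← Matrix.mul_assoc]

lemma traceNorm_unitary_mul (W : Matrix.unitaryGroup m ℂ) (A : Matrix m m ℂ) :
    traceNorm ((W : Matrix m m ℂ) * A) = traceNorm A := by
  unfold traceNorm
  rw [show (fun U : Matrix.unitaryGroup m ℂ =>
        ‖((U : Matrix m m ℂ) * ((W : Matrix m m ℂ) * A)).trace‖)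
      = (fun V : Matrix.unitaryGroup m ℂ => ‖((V : Matrix m m ℂ) * A).trace‖)
        ∘ (Equiv.mulRight W) from funext fun U => ?_]
  · rw [iSup, iSup, Function.Surjective.range_comp (Equiv.mulRight W).surjective]
  · simp only [Function.comp_apply, Equiv.coe_mulRight, Submonoid.coe_mul]
    rw [← Matrix.mul_assoc]

end TraceNormLemmas


-- ## vecMulVec toolbox
section VecLemmas
variable {m : Type*} [Fintype m] [DecidableEq m]

lemma mul_vecMulVec' (A : Matrix m m ℂ) (u w : m → ℂ) :
    A * Matrix.vecMulVec u w = Matrix.vecMulVec (A *ᵥ u) w := by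
  ext i j
  simp only [Matrix.mul_apply, Matrix.vecMulVec_apply, Matrix.mulVec, dotProduct,
    Finset.sum_mul]
  exact Finset.sum_congr rfl fun k _ => by ring

lemma vecMulVec_mul' (u w : m → ℂ) (A : Matrix m m ℂ) :
    Matrix.vecMulVec u w * A = Matrix.vecMulVec u (w ᵥ* A) := by
  ext i j
  simp only [Matrix.mul_apply, Matrix.vecMulVec_apply, Matrix.vecMul, dotProduct,
    Finset.mul_sum]
  exact Finset.sum_congr rfl fun k _ => by ring

lemma vecMulVec_mul_vecMulVec' (u v w z : m → ℂ) :
    Matrix.vecMulVec u v * Matrix.vecMulVec w z = (v ⬝ᵥ w) • Matrix.vecMulVec u z := by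
  ext i j
  simp only [Matrix.mul_apply, Matrix.vecMulVec_apply, Matrix.smul_apply, dotProduct,
    smul_eq_mul, Finset.sum_mul, Finset.mul_sum]
  exact Finset.sum_congr rfl fun k _ => by ring

lemma trace_vecMulVec (u w : m → ℂ) : (Matrix.vecMulVec u w).trace = ∑ x, u x * w x := by
  rw [Matrix.trace]
  simp [Matrix.diag_apply, Matrix.vecMulVec_apply]

lemma vecMulVec_star_conjT (u : m → ℂ) :
    (Matrix.vecMulVec u (star u))ᴴ = Matrix.vecMulVec u (star u) := by
  ext i j
  simp only [Matrix.conjTranspose_apply, Matrix.vecMulVec_apply, Pi.star_apply, star_mul']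
  rw [star_star]
  ring


lemma star_dot_self (w : m → ℂ) : star w ⬝ᵥ w = ((∑ x, ‖w x‖^2 : ℝ) : ℂ) := by
  rw [dotProduct]
  push_cast
  refine Finset.sum_congr rfl fun x _ => ?_
  simp only [Pi.star_apply]
  rw [mul_comm, show star (w x) = (starRingEnd ℂ) (w x) from rfl, Complex.mul_conj,
    Complex.normSq_eq_norm_sq]
  push_cast
  ring

lemma mulVec_norm_preserve (U : Matrix.unitaryGroup m ℂ) (u : m → ℂ) :
    ∑ x, ‖((U : Matrix m m ℂ) *ᵥ u) x‖^2 = ∑ x, ‖u x‖^2 := by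
  have key : star ((U : Matrix m m ℂ) *ᵥ u) ⬝ᵥ ((U : Matrix m m ℂ) *ᵥ u) = star u ⬝ᵥ u := by
    rw [Matrix.star_mulVec, dotProduct_mulVec, Matrix.vecMul_vecMul,
      show (U : Matrix m m ℂ)ᴴ * (U : Matrix m m ℂ) = 1 from
        Matrix.UnitaryGroup.star_mul_self U, Matrix.vecMul_one]
  rw [star_dot_self, star_dot_self] at key
  exact_mod_cast key

lemma trace_mul_vecMulVec (U : Matrix m m ℂ) (u v : m → ℂ) :
    (U * Matrix.vecMulVec u v).trace = ∑ x, v x * (U *ᵥ u) x := by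
  rw [Matrix.trace]
  simp only [Matrix.diag_apply, Matrix.mul_apply, Matrix.vecMulVec_apply,
    Matrix.mulVec, dotProduct]
  refine Finset.sum_congr rfl fun x _ => ?_
  rw [Finset.mul_sum]
  exact Finset.sum_congr rfl fun y _ => by ring

lemma traceNorm_rankOne_le (u : m → ℂ) :
    traceNorm (Matrix.vecMulVec u (star u)) ≤ ∑ x, ‖u x‖^2 := by
  refine ciSup_le fun U => ?_
  rw [trace_mul_vecMulVec]
  set w := (U : Matrix m m ℂ) *ᵥ u with hw
  calc ‖∑ x, star u x * w x‖ ≤ ∑ x, ‖star u x * w x‖ := norm_sum_le _ _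
    _ = ∑ x, ‖u x‖ * ‖w x‖ := by
        refine Finset.sum_congr rfl fun x _ => ?_
        rw [norm_mul, Pi.star_apply, norm_star]
    _ ≤ ∑ x, ‖u x‖^2 := by
        have cs := Finset.sum_mul_sq_le_sq_mul_sq Finset.univ
          (fun x => ‖u x‖) (fun x => ‖w x‖)
        have hw2 : ∑ x, ‖w x‖^2 = ∑ x, ‖u x‖^2 := mulVec_norm_preserve U u
        rw [hw2] at cs
        have h1 : (0:ℝ) ≤ ∑ x, ‖u x‖ * ‖w x‖ :=
          Finset.sum_nonneg fun x _ => mul_nonneg (norm_nonneg _) (norm_nonneg _)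
        have h2 : (0:ℝ) ≤ ∑ x, ‖u x‖^2 := Finset.sum_nonneg fun x _ => sq_nonneg _
        nlinarith

end VecLemmas


-- ## vectorized Paulis
abbrev QB (n : ℕ) := Fin n → Fin 2

section Pvec
variable {n : ℕ}

lemma PauliOp_star_apply (a : Fin n → Fin 4) (x y : Fin n → Fin 2) :
    star (PauliOp a x y) = PauliOp a y x := by
  conv_rhs => rw [← PauliOp_star a]
  rfl

/-- The vectorized Pauli `v a = (P_a ⊗ I)|Γ⟩` (unnormalized). -/
def pvec (a : Fin n → Fin 4) : (Fin n → Fin 2) × (Fin n → Fin 2) → ℂ :=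
  fun x => PauliOp a x.1 x.2

lemma pvec_dot (a b : Fin n → Fin 4) :
    star (pvec a) ⬝ᵥ pvec b = if a = b then (2:ℂ)^n else 0 := by
  rw [dotProduct, ← PauliOp_trace a b, Matrix.trace]
  rw [Fintype.sum_prod_type]
  rw [Finset.sum_comm]
  refine Finset.sum_congr rfl fun x2 _ => ?_
  simp only [Matrix.diag_apply, Matrix.mul_apply, pvec, Pi.star_apply]
  refine Finset.sum_congr rfl fun x1 _ => ?_
  rw [PauliOp_star_apply]

lemma pvec_dot' (a b : Fin n → Fin 4) :
    ∑ x : (Fin n → Fin 2) × (Fin n → Fin 2), pvec a x * star (pvec b x)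
      = if a = b then (2:ℂ)^n else 0 := by
  rw [show (if a = b then (2:ℂ)^n else 0) = if b = a then (2:ℂ)^n else 0 from
    if_congr eq_comm rfl rfl, ← pvec_dot b a, dotProduct]
  exact Finset.sum_congr rfl fun x _ => by simp only [Pi.star_apply]; ring

lemma pvec_complete (x y : (Fin n → Fin 2) × (Fin n → Fin 2)) :
    ∑ a : Fin n → Fin 4, pvec a x * star (pvec a y) = if x = y then (2:ℂ)^n else 0 := by
  rw [show (if x = y then (2:ℂ)^n else 0) = if x.1 = y.1 ∧ x.2 = y.2 then (2:ℂ)^n else 0 by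
    rw [if_congr Prod.ext_iff rfl rfl]]
  exact PauliOp_complete x.1 x.2 y.1 y.2


/-- `Q a = P_a ⊗ I`. -/
def Qop (a : Fin n → Fin 4) : Matrix (QB n × QB n) (QB n × QB n) ℂ :=
  Matrix.of fun x y => PauliOp a x.1 y.1 * (if x.2 = y.2 then 1 else 0)

lemma Qop_mul_self (a : Fin n → Fin 4) : Qop a * Qop a = 1 := by
  ext x y
  rw [Matrix.mul_apply, Fintype.sum_prod_type]
  simp only [Qop, Matrix.of_apply]
  have : ∀ i1 : QB n, ∑ i2 : QB n,
      (PauliOp a x.1 i1 * (if x.2 = i2 then 1 else 0)) *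
        (PauliOp a i1 y.1 * (if i2 = y.2 then 1 else 0))
      = PauliOp a x.1 i1 * PauliOp a i1 y.1 * (if x.2 = y.2 then 1 else 0) := by
    intro i1
    rw [Finset.sum_eq_single x.2]
    · by_cases h : x.2 = y.2
      · simp [h]
      · simp [h, if_neg h]
    · intro b _ hb
      simp [if_neg (Ne.symm hb)]
    · simp
  rw [Finset.sum_congr rfl fun i1 _ => this i1]
  rw [← Finset.sum_mul, ← Matrix.mul_apply, PauliOp_mul_self]
  by_cases h1 : x.1 = y.1 <;> by_cases h2 : x.2 = y.2 <;>
    simp [Matrix.one_apply, h1, h2, Prod.ext_iff]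

lemma Qop_star (a : Fin n → Fin 4) : star (Qop a) = Qop a := by
  ext x y
  show star (Qop a y x) = Qop a x y
  simp only [Qop, Matrix.of_apply, star_mul']
  rw [PauliOp_star_apply]
  congr 1
  · rw [show star (if y.2 = x.2 then (1:ℂ) else 0) = if y.2 = x.2 then (1:ℂ) else 0 by
      split <;> simp]
    exact if_congr eq_comm rfl rfl

lemma Qop_mem : ∀ a : Fin n → Fin 4, Qop a ∈ Matrix.unitaryGroup (QB n × QB n) ℂ := by
  intro a
  constructor
  · rw [Qop_star, Qop_mul_self]
  · rw [Qop_star, Qop_mul_self]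

/-- amp of the Pauli-difference channel is conjugation by `Q a`'s. -/
lemma amp_channel (c : (Fin n → Fin 4) → ℝ) (s : Finset (Fin n → Fin 4))
    (X : Matrix (QB n × QB n) (QB n × QB n) ℂ) :
    amp (fun ρ : Matrix (QB n) (QB n) ℂ => ∑ a ∈ s, ((c a : ℝ) : ℂ) • (PauliOp a * ρ * PauliOp a)) X
      = ∑ a ∈ s, ((c a : ℝ) : ℂ) • (Qop a * X * Qop a) := by
  ext x y
  simp only [amp, Matrix.of_apply, Matrix.sum_apply, Matrix.smul_apply, smul_eq_mul]
  refine Finset.sum_congr rfl fun a _ => ?_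
  congr 1
  have hL : (PauliOp a * (Matrix.of fun i j => X (i, x.2) (j, y.2)) * PauliOp a) x.1 y.1
      = ∑ k, ∑ i, PauliOp a x.1 i * X (i, x.2) (k, y.2) * PauliOp a k y.1 := by
    rw [Matrix.mul_apply]
    refine Finset.sum_congr rfl fun k _ => ?_
    rw [Matrix.mul_apply, Finset.sum_mul]
    exact Finset.sum_congr rfl fun i _ => by simp only [Matrix.of_apply]
  have hR : (Qop a * X * Qop a) x y
      = ∑ k, ∑ i, PauliOp a x.1 i * X (i, x.2) (k, y.2) * PauliOp a k y.1 := by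
    rw [Matrix.mul_apply, Fintype.sum_prod_type]
    refine Finset.sum_congr rfl fun j1 _ => ?_
    rw [Finset.sum_eq_single y.2 (fun b _ hb => by simp [Qop, if_neg hb]) (by simp)]
    have hQX : (Qop a * X) x (j1, y.2)
        = ∑ i1, PauliOp a x.1 i1 * X (i1, x.2) (j1, y.2) := by
      rw [Matrix.mul_apply, Fintype.sum_prod_type]
      refine Finset.sum_congr rfl fun i1 _ => ?_
      rw [Finset.sum_eq_single x.2 (fun b _ hb => by simp [Qop, if_neg (Ne.symm hb)]) (by simp)]
      simp [Qop]
    rw [hQX, Finset.sum_mul]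
    refine Finset.sum_congr rfl fun i1 _ => ?_
    simp only [Qop, Matrix.of_apply, if_true, mul_one]
  rw [hL, hR]


/-- the maximally entangled (unnormalized) vector -/
def entv (n : ℕ) : QB n × QB n → ℂ := fun x => if x.1 = x.2 then 1 else 0

lemma entv_star : star (entv n) = entv n := by
  funext x
  simp only [Pi.star_apply, entv]
  split <;> simp

lemma entv_norm_sum : ∑ x : QB n × QB n, ‖entv n x‖^2 = 2^n := by
  have : ∀ x : QB n × QB n, ‖entv n x‖^2 = if x.1 = x.2 then 1 else 0 := by
    intro x; simp only [entv]; split <;> simp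
  rw [Finset.sum_congr rfl fun x _ => this x]
  rw [Fintype.sum_prod_type]
  have : ∀ x1 : QB n, ∑ x2 : QB n, (if x1 = x2 then (1:ℝ) else 0) = 1 := by
    intro x1; simp
  rw [Finset.sum_congr rfl fun x1 _ => this x1]
  simp [Finset.card_univ]

lemma Qop_mulVec_entv (a : Fin n → Fin 4) : Qop a *ᵥ entv n = pvec a := by
  funext x
  simp only [Matrix.mulVec, dotProduct, Qop, Matrix.of_apply, entv, pvec]
  rw [Fintype.sum_prod_type]
  rw [Finset.sum_eq_single x.2 ?h1 ?h2]
  · rw [Finset.sum_eq_single x.2 (fun b _ hb => by simp [if_neg (Ne.symm hb)]) (by simp)]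
    simp
  · intro b _ hb
    rw [Finset.sum_eq_single b (fun k _ hk => by simp [if_neg (Ne.symm hk)]) (by simp)]
    simp [if_neg (Ne.symm hb)]
  · simp

lemma entv_vecMul_Qop (a : Fin n → Fin 4) : entv n ᵥ* Qop a = star (pvec a) := by
  funext y
  simp only [Matrix.vecMul, dotProduct, Qop, Matrix.of_apply, entv, Pi.star_apply, pvec]
  rw [Fintype.sum_prod_type]
  have inner : ∀ i1 : QB n, (∑ i2 : QB n, (if i1 = i2 then (1:ℂ) else 0) *
      (PauliOp a i1 y.1 * if i2 = y.2 then 1 else 0))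
      = PauliOp a i1 y.1 * (if i1 = y.2 then 1 else 0) := by
    intro i1
    rw [Finset.sum_eq_single i1 (fun b _ hb => by simp [if_neg (Ne.symm hb)]) (by simp)]
    simp
  rw [Finset.sum_congr rfl fun i1 _ => inner i1]
  rw [Finset.sum_eq_single y.2 (fun b _ hb => by simp [if_neg hb]) (by simp)]
  rw [PauliOp_star_apply]
  simp

/-- rank-one Pauli projector (times `2^n`) -/
def Rop (a : Fin n → Fin 4) : Matrix (QB n × QB n) (QB n × QB n) ℂ :=
  Matrix.vecMulVec (pvec a) (star (pvec a))

lemma Rop_mul_Rop (a b : Fin n → Fin 4) :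
    Rop a * Rop b = (if a = b then (2:ℂ)^n else 0) •
      Matrix.vecMulVec (pvec a) (star (pvec b)) := by
  rw [Rop, Rop, vecMulVec_mul_vecMulVec', pvec_dot]

lemma sum_Rop : ∑ a : Fin n → Fin 4, Rop a = ((2:ℂ)^n) • 1 := by
  ext x y
  simp only [Matrix.sum_apply, Rop, Matrix.vecMulVec_apply, Pi.star_apply,
    Matrix.smul_apply, Matrix.one_apply, smul_eq_mul]
  rw [pvec_complete]
  split <;> simp

lemma trace_Rop (a : Fin n → Fin 4) : (Rop a).trace = (2:ℂ)^n := by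
  rw [Rop, Matrix.trace]
  simp only [Matrix.diag_apply, Matrix.vecMulVec_apply, Pi.star_apply]
  have := pvec_dot' a a
  rw [if_pos rfl] at this
  rw [← this]

lemma sum_smul_Rop_mul (s t : (Fin n → Fin 4) → ℝ) :
    (∑ a : Fin n → Fin 4, ((s a : ℝ) : ℂ) • Rop a) *
      (∑ b : Fin n → Fin 4, ((t b : ℝ) : ℂ) • Rop b)
      = ((2:ℂ)^n) • ∑ a : Fin n → Fin 4, (((s a * t a : ℝ)) : ℂ) • Rop a := by
  rw [Finset.sum_mul_sum]
  rw [Finset.smul_sum]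
  refine Finset.sum_congr rfl fun a _ => ?_
  rw [Finset.sum_eq_single a ?ne ?notmem]
  · rw [smul_mul_assoc, mul_smul_comm, Rop_mul_Rop, if_pos rfl]
    rw [smul_smul, smul_smul, smul_smul]
    rw [show ((s a:ℝ):ℂ) * ((t a:ℝ):ℂ) * (2:ℂ)^n = (2:ℂ)^n * ((s a * t a : ℝ):ℂ) by
      push_cast; ring]
    rfl
  · intro b _ hb
    rw [smul_mul_assoc, mul_smul_comm, Rop_mul_Rop, if_neg (Ne.symm hb)]
    simp
  · simp

lemma star_Rop (a : Fin n → Fin 4) : star (Rop a) = Rop a := by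
  rw [Matrix.star_eq_conjTranspose, Rop, vecMulVec_star_conjT]

/-- the optimal unitary -/
def Uopt (c : (Fin n → Fin 4) → ℝ) : Matrix (QB n × QB n) (QB n × QB n) ℂ :=
  (((2:ℝ)^n)⁻¹ : ℂ) • ∑ a : Fin n → Fin 4,
    (((if 0 ≤ c a then (1:ℝ) else -1) : ℝ) : ℂ) • Rop a

lemma star_Uopt (c : (Fin n → Fin 4) → ℝ) : star (Uopt c) = Uopt c := by
  rw [Uopt, star_smul, star_sum]
  have h1 : star ((((2:ℝ)^n)⁻¹ : ℂ)) = (((2:ℝ)^n)⁻¹ : ℂ) := by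
    simp [Complex.star_def, map_inv₀, map_pow]
  rw [h1]
  congr 1
  refine Finset.sum_congr rfl fun a _ => ?_
  rw [star_smul, star_Rop, Complex.star_def, Complex.conj_ofReal]

lemma Uopt_mul_self (c : (Fin n → Fin 4) → ℝ) : Uopt c * Uopt c = 1 := by
  rw [Uopt, smul_mul_assoc, mul_smul_comm, sum_smul_Rop_mul]
  have : ∀ a : Fin n → Fin 4,
      (((if 0 ≤ c a then (1:ℝ) else -1) * (if 0 ≤ c a then (1:ℝ) else -1) : ℝ) : ℂ) = 1 := by
    intro a; split <;> norm_num
  rw [Finset.sum_congr rfl fun a _ => by rw [this a]]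
  simp only [one_smul]
  rw [sum_Rop, smul_smul, smul_smul, smul_smul]
  convert one_smul ℂ (1 : Matrix (QB n × QB n) (QB n × QB n) ℂ) using 2
  have h2 : ((2:ℂ))^n ≠ 0 := pow_ne_zero _ two_ne_zero
  push_cast
  field_simp

lemma Uopt_mem (c : (Fin n → Fin 4) → ℝ) :
    Uopt c ∈ Matrix.unitaryGroup (QB n × QB n) ℂ :=
  ⟨by rw [star_Uopt, Uopt_mul_self], by rw [star_Uopt, Uopt_mul_self]⟩


def Xent (n : ℕ) : Matrix (QB n × QB n) (QB n × QB n) ℂ :=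
  (((2:ℝ)^n)⁻¹ : ℂ) • Matrix.vecMulVec (entv n) (star (entv n))

lemma norm_inv_two_pow : ‖((((2:ℝ)^n)⁻¹ : ℂ))‖ = ((2:ℝ)^n)⁻¹ := by
  rw [norm_inv, norm_pow]
  norm_num

lemma traceNorm_Xent : traceNorm (Xent n) ≤ 1 := by
  rw [Xent, traceNorm_smul, norm_inv_two_pow]
  calc ((2:ℝ)^n)⁻¹ * traceNorm (Matrix.vecMulVec (entv n) (star (entv n)))
      ≤ ((2:ℝ)^n)⁻¹ * (2:ℝ)^n := by
        refine mul_le_mul_of_nonneg_left ?_ (by positivity)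
        exact (traceNorm_rankOne_le (entv n)).trans_eq entv_norm_sum
    _ = 1 := inv_mul_cancel₀ (by positivity)

lemma Qop_Xent_Qop (a : Fin n → Fin 4) :
    Qop a * Xent n * Qop a = (((2:ℝ)^n)⁻¹ : ℂ) • Rop a := by
  rw [Xent, Matrix.mul_smul, Matrix.smul_mul, mul_vecMulVec', Qop_mulVec_entv,
    vecMulVec_mul', entv_star, entv_vecMul_Qop, Rop]

lemma amp_Xent (c : (Fin n → Fin 4) → ℝ) :
    amp (fun ρ : Matrix (QB n) (QB n) ℂ =>
        ∑ a : Fin n → Fin 4, ((c a : ℝ) : ℂ) • (PauliOp a * ρ * PauliOp a)) (Xent n)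
      = (((2:ℝ)^n)⁻¹ : ℂ) • ∑ a : Fin n → Fin 4, ((c a : ℝ) : ℂ) • Rop a := by
  rw [amp_channel c Finset.univ (Xent n)]
  rw [Finset.smul_sum]
  refine Finset.sum_congr rfl fun a _ => ?_
  rw [Qop_Xent_Qop, smul_comm]

lemma trace_Uopt_amp (c : (Fin n → Fin 4) → ℝ) :
    (Uopt c * ((((2:ℝ)^n)⁻¹ : ℂ) • ∑ a : Fin n → Fin 4, ((c a : ℝ) : ℂ) • Rop a)).trace
      = ((∑ a : Fin n → Fin 4, |c a| : ℝ) : ℂ) := by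
  rw [Uopt, Matrix.smul_mul, Matrix.mul_smul, sum_smul_Rop_mul]
  have habs : ∀ a : Fin n → Fin 4,
      (((if 0 ≤ c a then (1:ℝ) else -1) * c a : ℝ) : ℂ) = ((|c a| : ℝ) : ℂ) := by
    intro a
    congr 1
    split
    · rw [one_mul, abs_of_nonneg ‹_›]
    · rw [neg_one_mul, abs_of_neg (lt_of_not_ge ‹_›)]
  rw [Finset.sum_congr rfl fun a _ => by rw [habs a]]
  rw [smul_smul, smul_smul, Matrix.trace_smul, Matrix.trace_sum]
  rw [Finset.sum_congr rfl fun a _ => by rw [Matrix.trace_smul, trace_Rop]]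
  simp only [smul_eq_mul, ← Finset.sum_mul]
  push_cast
  have h2 : ((2:ℂ))^n ≠ 0 := pow_ne_zero _ two_ne_zero
  field_simp

theorem diamond_univ (c : (Fin n → Fin 4) → ℝ) :
    diamondNorm (fun ρ : Matrix (QB n) (QB n) ℂ =>
      ∑ a : Fin n → Fin 4, ((c a : ℝ) : ℂ) • (PauliOp a * ρ * PauliOp a))
      = ∑ a : Fin n → Fin 4, |c a| := by
  haveI : Nonempty {X : Matrix ((QB n) × (QB n)) ((QB n) × (QB n)) ℂ // traceNorm X ≤ 1} :=
    ⟨⟨0, by rw [traceNorm_zero]; norm_num⟩⟩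
  have upper : ∀ X : Matrix ((QB n) × (QB n)) ((QB n) × (QB n)) ℂ, traceNorm X ≤ 1 →
      traceNorm (amp (fun ρ : Matrix (QB n) (QB n) ℂ =>
        ∑ a : Fin n → Fin 4, ((c a : ℝ) : ℂ) • (PauliOp a * ρ * PauliOp a)) X)
        ≤ ∑ a : Fin n → Fin 4, |c a| := by
    intro X hX
    rw [amp_channel c Finset.univ X]
    refine (traceNorm_sum_le _ _).trans ?_
    refine Finset.sum_le_sum fun a _ => ?_
    rw [traceNorm_smul]
    have hQ : traceNorm (Qop a * X * Qop a) = traceNorm X := by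
      have h1 := traceNorm_unitary_mul
        (⟨Qop a, Qop_mem a⟩ : Matrix.unitaryGroup ((QB n) × (QB n)) ℂ) (X * Qop a)
      have h2 := traceNorm_mul_unitary X
        (⟨Qop a, Qop_mem a⟩ : Matrix.unitaryGroup ((QB n) × (QB n)) ℂ)
      rw [Matrix.mul_assoc]
      exact h1.trans h2
    rw [hQ]
    have hn : ‖((c a : ℝ):ℂ)‖ = |c a| := by rw [Complex.norm_real, Real.norm_eq_abs]
    rw [hn]
    calc |c a| * traceNorm X ≤ |c a| * 1 := mul_le_mul_of_nonneg_left hX (abs_nonneg _)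
      _ = |c a| := mul_one _
  have nonneg : 0 ≤ ∑ a : Fin n → Fin 4, |c a| := Finset.sum_nonneg fun a _ => abs_nonneg _
  have lower : ∑ a : Fin n → Fin 4, |c a| ≤ traceNorm (amp (fun ρ : Matrix (QB n) (QB n) ℂ =>
      ∑ a : Fin n → Fin 4, ((c a : ℝ) : ℂ) • (PauliOp a * ρ * PauliOp a)) (Xent n)) := by
    rw [amp_Xent c]
    have h := le_traceNorm (⟨Uopt c, Uopt_mem c⟩ : Matrix.unitaryGroup ((QB n) × (QB n)) ℂ)
      ((((2:ℝ)^n)⁻¹ : ℂ) • ∑ a : Fin n → Fin 4, ((c a : ℝ) : ℂ) • Rop a)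
    rw [show ((⟨Uopt c, Uopt_mem c⟩ : Matrix.unitaryGroup ((QB n) × (QB n)) ℂ) :
      Matrix ((QB n) × (QB n)) ((QB n) × (QB n)) ℂ) = Uopt c from rfl] at h
    rw [trace_Uopt_amp c] at h
    rwa [Complex.norm_real, Real.norm_eq_abs, abs_of_nonneg nonneg] at h
  refine le_antisymm ?_ ?_
  · exact ciSup_le fun X => upper X.1 X.2
  · have bdd : BddAbove (Set.range fun X :
        {X : Matrix ((QB n) × (QB n)) ((QB n) × (QB n)) ℂ // traceNorm X ≤ 1} =>
        traceNorm (amp (fun ρ : Matrix (QB n) (QB n) ℂ =>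
          ∑ a : Fin n → Fin 4, ((c a : ℝ) : ℂ) • (PauliOp a * ρ * PauliOp a))
          (X : Matrix ((QB n) × (QB n)) ((QB n) × (QB n)) ℂ))) :=
      ⟨∑ a : Fin n → Fin 4, |c a|, by rintro r ⟨⟨X, hX⟩, rfl⟩; exact upper X hX⟩
    exact lower.trans (le_ciSup bdd ⟨Xent n, traceNorm_Xent⟩)


/-- diamond-norm identity for Pauli noise: for the Pauli noise
`N(ρ) = (1−p_err)ρ + ∑_i p_i P_i ρ P_i` and the global white noise `N_wn` with the same
error rate, the difference is `ρ ↦ ∑_{a ≠ I} (p_a − p_err/(4^n−1)) P_a ρ P_a`, and its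
normalized diamond norm equals the 1-norm of the normalized error-probability
deviations: `‖N − N_wn‖_⋄ / p_err = ∑_{a ≠ I} |p_a/p_err − 1/(4^n−1)|`. -/
theorem stmt19 (n : ℕ) (hn : 1 ≤ n)
    (p : (Fin n → Fin 4) → ℝ) (hp : ∀ a, 0 ≤ p a) (hpid : p 0 = 0)
    (perr : ℝ) (hperr : perr = ∑ a, p a) (hpos : 0 < perr) (hle : perr ≤ 1) :
    diamondNorm (fun ρ : Matrix (Fin n → Fin 2) (Fin n → Fin 2) ℂ =>
        ∑ a ∈ Finset.univ.erase (0 : Fin n → Fin 4),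
          (((p a - perr / ((4 : ℝ) ^ n - 1)) : ℝ) : ℂ) • (PauliOp a * ρ * PauliOp a))
        / perr
      = ∑ a ∈ Finset.univ.erase (0 : Fin n → Fin 4),
          |p a / perr - 1 / ((4 : ℝ) ^ n - 1)| := by
  classical
  set E : ℝ := (4 : ℝ) ^ n - 1 with hE
  set c : (Fin n → Fin 4) → ℝ := fun a => if a = 0 then 0 else p a - perr / E with hc
  have hΦ : (fun ρ : Matrix (Fin n → Fin 2) (Fin n → Fin 2) ℂ =>
      ∑ a ∈ Finset.univ.erase (0 : Fin n → Fin 4),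
        (((p a - perr / E) : ℝ) : ℂ) • (PauliOp a * ρ * PauliOp a))
      = (fun ρ : Matrix (QB n) (QB n) ℂ =>
        ∑ a : Fin n → Fin 4, ((c a : ℝ) : ℂ) • (PauliOp a * ρ * PauliOp a)) := by
    funext ρ
    rw [← Finset.sum_erase (f := fun a : Fin n → Fin 4 => ((c a : ℝ) : ℂ) • (PauliOp a * ρ * PauliOp a))
      (a := 0) Finset.univ (by simp [hc])]
    refine Finset.sum_congr rfl fun a ha => ?_
    have ha0 : a ≠ 0 := Finset.ne_of_mem_erase ha
    rw [hc]
    simp only [if_neg ha0]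
  rw [hΦ, diamond_univ c]
  have hsum : ∑ a : Fin n → Fin 4, |c a|
      = ∑ a ∈ Finset.univ.erase (0 : Fin n → Fin 4), |p a - perr / E| := by
    rw [← Finset.sum_erase (f := fun a : Fin n → Fin 4 => |c a|) (a := 0) Finset.univ (by simp [hc])]
    refine Finset.sum_congr rfl fun a ha => ?_
    rw [hc]
    simp only [if_neg (Finset.ne_of_mem_erase ha)]
  rw [hsum, Finset.sum_div]
  refine Finset.sum_congr rfl fun a _ => ?_
  have hne : perr ≠ 0 := ne_of_gt hpos
  have h1 : |p a - perr / E| / perr = |(p a - perr / E) / perr| := by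
    rw [abs_div, abs_of_pos hpos]
  rw [h1, sub_div, div_div, mul_comm E perr, ← div_div, div_self hne]
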